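/- Let (M, d) be a C-quasi-convex metric space, Θ ⊆ M permeable, and (Y, d_Y) a metric space. If f : M → Y is continuous and its restriction to M \ Θ is L-Lipschitz with respect to the intrinsic metric on M \ Θ, then f is CL-Lipschitz on M with respect to d. -/

import Mathlib

open Set MeasureTheory ENNReal

section Defs

variable {M : Type*} [MetricSpace M]

/-- `γ` is a path in `E` from `x` to `y` parametrized on `[a,b]`. -/
def IsPathIn (E : Set M) (γ : ℝ → M) (a b : ℝ) (x y : M) : Prop :=
  a ≤ b ∧ ContinuousOn γ (Set.Icc a b) ∧ γ a = x ∧ γ b = y ∧ ∀ t ∈ Set.Icc a b, γ t ∈ E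

/-- Length of a path: total variation over `[a,b]`. -/
noncomputable def pathLength (γ : ℝ → M) (a b : ℝ) : ℝ≥0∞ := eVariationOn γ (Set.Icc a b)

/-- Intrinsic metric on `E`: infimum of lengths of finite-length paths in `E`. -/
noncomputable def intrinsicDist (E : Set M) (x y : M) : ℝ≥0∞ :=
  sInf { L | ∃ γ a b, IsPathIn E γ a b x y ∧ pathLength γ a b < ⊤ ∧ pathLength γ a b = L }

/-- `Θ`-intrinsic metric relative to ambient set `N`: only paths whose intersection with `Θ`
has countable closure (closure taken in the subspace `N`) are allowed. -/
noncomputable def thetaDistIn (N Θ : Set M) (x y : M) : ℝ≥0∞ :=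
  sInf { L | ∃ γ a b, IsPathIn N γ a b x y ∧ pathLength γ a b < ⊤ ∧
    (closure (γ '' Set.Icc a b ∩ Θ) ∩ N).Countable ∧ pathLength γ a b = L }

/-- `Θ`-finite intrinsic metric relative to ambient set `N`: only paths meeting `Θ` in finitely
many points are allowed. -/
noncomputable def thetaFinDistIn (N Θ : Set M) (x y : M) : ℝ≥0∞ :=
  sInf { L | ∃ γ a b, IsPathIn N γ a b x y ∧ pathLength γ a b < ⊤ ∧
    (γ '' Set.Icc a b ∩ Θ).Finite ∧ pathLength γ a b = L }

/-- `Θ` is permeable relative to `N`. -/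
def PermeableIn (N Θ : Set M) : Prop :=
  ∀ x ∈ N, ∀ y ∈ N, thetaDistIn N Θ x y = intrinsicDist N x y

/-- `Θ` is finitely permeable relative to `N`. -/
def FinitelyPermeableIn (N Θ : Set M) : Prop :=
  ∀ x ∈ N, ∀ y ∈ N, thetaFinDistIn N Θ x y = intrinsicDist N x y

/-- `Θ` is permeable (relative to the whole space). -/
def Permeable (Θ : Set M) : Prop := PermeableIn Set.univ Θ

/-- `Θ` is finitely permeable (relative to the whole space). -/
def FinitelyPermeable (Θ : Set M) : Prop := FinitelyPermeableIn Set.univ Θ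

end Defs

section Helpers

open Filter

variable {M Y : Type*} [MetricSpace M] [MetricSpace Y]

private lemma evar_sum_le (γ : ℝ → M) :
    ∀ (n : ℕ) (F : Finset (ℝ × ℝ)) (a b : ℝ), F.card = n → a ≤ b →
      (∀ p ∈ F, a ≤ p.1 ∧ p.1 < p.2 ∧ p.2 ≤ b) →
      (∀ p ∈ F, ∀ q ∈ F, p ≠ q → Set.Ioo p.1 p.2 ∩ Set.Ioo q.1 q.2 = ∅) →
      ∑ p ∈ F, eVariationOn γ (Set.Icc p.1 p.2) ≤ eVariationOn γ (Set.Icc a b) := by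
  intro n
  induction n with
  | zero =>
    intro F a b hcard _ _ _
    rw [Finset.card_eq_zero.mp hcard]
    simp
  | succ n ih =>
    intro F a b hcard hab hmem hdisj
    classical
    have hne : F.Nonempty := Finset.card_pos.mp (by omega)
    obtain ⟨p, hpF, hpmax⟩ := F.exists_max_image Prod.fst hne
    have hp := hmem p hpF
    have hq2 : ∀ q ∈ F.erase p, q.2 ≤ p.1 := by
      intro q hq
      by_contra hlt
      push_neg at hlt
      have hqF := Finset.mem_of_mem_erase hq
      have hqp : q ≠ p := Finset.ne_of_mem_erase hq
      obtain ⟨t, ht1, ht2⟩ := exists_between (lt_min hp.2.1 hlt)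
      have hmem' : t ∈ Set.Ioo p.1 p.2 ∩ Set.Ioo q.1 q.2 :=
        ⟨⟨ht1, lt_of_lt_of_le ht2 (min_le_left _ _)⟩,
         ⟨lt_of_le_of_lt (hpmax q hqF) ht1, lt_of_lt_of_le ht2 (min_le_right _ _)⟩⟩
      exact (Set.eq_empty_iff_forall_notMem.mp
        (hdisj p hpF q hqF hqp.symm)) t hmem'
    have hsum : ∑ q ∈ F.erase p, eVariationOn γ (Set.Icc q.1 q.2)
        ≤ eVariationOn γ (Set.Icc a p.1) :=
      ih (F.erase p) a p.1 (by rw [Finset.card_erase_of_mem hpF, hcard]; omega) hp.1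
        (fun q hq => ⟨(hmem q (Finset.mem_of_mem_erase hq)).1,
          (hmem q (Finset.mem_of_mem_erase hq)).2.1, hq2 q hq⟩)
        (fun q hq q' hq' hne' =>
          hdisj q (Finset.mem_of_mem_erase hq) q' (Finset.mem_of_mem_erase hq') hne')
    have h1 : eVariationOn γ (Set.Icc p.1 p.2) ≤ eVariationOn γ (Set.Icc p.1 b) :=
      eVariationOn.mono γ (Set.Icc_subset_Icc_right hp.2.2)
    rw [← Finset.add_sum_erase _ _ hpF]
    calc eVariationOn γ (Set.Icc p.1 p.2)
          + ∑ q ∈ F.erase p, eVariationOn γ (Set.Icc q.1 q.2)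
        ≤ eVariationOn γ (Set.Icc p.1 b) + eVariationOn γ (Set.Icc a p.1) := add_le_add h1 hsum
      _ = eVariationOn γ (Set.Icc a p.1) + eVariationOn γ (Set.Icc p.1 b) := add_comm _ _
      _ = eVariationOn γ (Set.Icc a b) := by
          have := eVariationOn.Icc_add_Icc γ (s := Set.univ) hp.1
            (le_trans hp.2.1.le hp.2.2) (Set.mem_univ p.1)
          simpa using this

private lemma compBound (Θ : Set M) (f : M → Y) (hf : Continuous f) (L : NNReal)
    (hLip : ∀ x ∈ Θᶜ, ∀ y ∈ Θᶜ, intrinsicDist Θᶜ x y < ⊤ →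
      edist (f x) (f y) ≤ L * intrinsicDist Θᶜ x y)
    (γ : ℝ → M) {a b u v : ℝ} (hγ : ContinuousOn γ (Set.Icc a b))
    (hau : a ≤ u) (huv : u ≤ v) (hvb : v ≤ b)
    (hfin : eVariationOn γ (Set.Icc a b) < ⊤)
    (hout : ∀ t ∈ Set.Ioo u v, γ t ∉ Θ) :
    edist (f (γ u)) (f (γ v)) ≤ L * eVariationOn γ (Set.Icc u v) := by
  rcases eq_or_lt_of_le huv with rfl | huv
  · simp
  have huab : u ∈ Set.Icc a b := ⟨hau, huv.le.trans hvb⟩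
  have hvab : v ∈ Set.Icc a b := ⟨hau.trans huv.le, hvb⟩
  have hIoo : Set.Ioo u v ⊆ Set.Icc a b := fun t ht => ⟨hau.trans ht.1.le, ht.2.le.trans hvb⟩
  have hcont : ContinuousOn (fun t => f (γ t)) (Set.Icc a b) := hf.comp_continuousOn hγ
  apply ENNReal.le_of_forall_pos_le_add
  intro ε hε _
  have hε2 : (0:ℝ≥0∞) < (ε:ℝ≥0∞)/2 := ENNReal.half_pos (by exact_mod_cast hε.ne')
  have hu' : Tendsto (fun t => f (γ t)) (nhdsWithin u (Set.Ioo u v)) (nhds (f (γ u))) :=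
    (hcont u huab).mono_left (nhdsWithin_mono u hIoo)
  have hev1 : ∀ᶠ t in nhdsWithin u (Set.Ioo u v), edist (f (γ t)) (f (γ u)) < (ε:ℝ≥0∞)/2 :=
    (EMetric.tendsto_nhds.mp hu') _ hε2
  have hnb1 : (nhdsWithin u (Set.Ioo u v)).NeBot := by
    rw [nhdsWithin_Ioo_eq_nhdsGT huv]
    exact nhdsGT_neBot u
  obtain ⟨s, hs1, hsIoo⟩ := (hev1.and eventually_mem_nhdsWithin).exists
  have hIoo2 : Set.Ioo s v ⊆ Set.Icc a b := fun t ht =>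
    ⟨hau.trans (hsIoo.1.le.trans ht.1.le), ht.2.le.trans hvb⟩
  have hv' : Tendsto (fun t => f (γ t)) (nhdsWithin v (Set.Ioo s v)) (nhds (f (γ v))) :=
    (hcont v hvab).mono_left (nhdsWithin_mono v hIoo2)
  have hev2 : ∀ᶠ t in nhdsWithin v (Set.Ioo s v), edist (f (γ t)) (f (γ v)) < (ε:ℝ≥0∞)/2 :=
    (EMetric.tendsto_nhds.mp hv') _ hε2
  have hnb2 : (nhdsWithin v (Set.Ioo s v)).NeBot := by
    rw [nhdsWithin_Ioo_eq_nhdsLT hsIoo.2]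
    exact nhdsLT_neBot v
  obtain ⟨t, ht2, htIoo⟩ := (hev2.and eventually_mem_nhdsWithin).exists
  have hsΘ : γ s ∈ Θᶜ := hout s hsIoo
  have htΘ : γ t ∈ Θᶜ := hout t ⟨hsIoo.1.trans htIoo.1, htIoo.2⟩
  have hst : s ≤ t := htIoo.1.le
  have hIccst : Set.Icc s t ⊆ Set.Ioo u v := fun w hw =>
    ⟨hsIoo.1.trans_le hw.1, lt_of_le_of_lt hw.2 htIoo.2⟩
  have hlen : pathLength γ s t ≤ eVariationOn γ (Set.Icc u v) :=
    eVariationOn.mono γ (fun w hw => Set.Ioo_subset_Icc_self (hIccst hw))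
  have hlenfin : pathLength γ s t < ⊤ :=
    lt_of_le_of_lt (hlen.trans (eVariationOn.mono γ (Set.Icc_subset_Icc hau hvb))) hfin
  have hintr : intrinsicDist Θᶜ (γ s) (γ t) ≤ pathLength γ s t := by
    apply sInf_le
    exact ⟨γ, s, t, ⟨hst, hγ.mono (fun w hw => hIoo (hIccst hw)), rfl, rfl,
      fun w hw => hout w (hIccst hw)⟩, hlenfin, rfl⟩
  have hmid : edist (f (γ s)) (f (γ t)) ≤ (L:ℝ≥0∞) * eVariationOn γ (Set.Icc u v) := by
    calc edist (f (γ s)) (f (γ t)) ≤ L * intrinsicDist Θᶜ (γ s) (γ t) :=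
          hLip _ hsΘ _ htΘ (lt_of_le_of_lt hintr hlenfin)
      _ ≤ (L:ℝ≥0∞) * eVariationOn γ (Set.Icc u v) :=
          mul_le_mul_right (hintr.trans hlen) _
  calc edist (f (γ u)) (f (γ v))
      ≤ edist (f (γ u)) (f (γ s)) + edist (f (γ s)) (f (γ t)) + edist (f (γ t)) (f (γ v)) :=
        edist_triangle4 _ _ _ _
    _ ≤ (ε:ℝ≥0∞)/2 + (L:ℝ≥0∞) * eVariationOn γ (Set.Icc u v) + (ε:ℝ≥0∞)/2 := by
        refine add_le_add (add_le_add ?_ hmid) ?_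
        · rw [edist_comm]; exact hs1.le
        · exact ht2.le
    _ = (L:ℝ≥0∞) * eVariationOn γ (Set.Icc u v) + ε := by
        rw [add_comm ((ε:ℝ≥0∞)/2) ((L:ℝ≥0∞) * eVariationOn γ (Set.Icc u v)),
          add_assoc, ENNReal.add_halves]

end Helpers
section Core

variable {M Y : Type*} [MetricSpace M] [MetricSpace Y]

private lemma coreBound (Θ : Set M) (f : M → Y) (hf : Continuous f) (L : NNReal)
    (hLip : ∀ x ∈ Θᶜ, ∀ y ∈ Θᶜ, intrinsicDist Θᶜ x y < ⊤ →
      edist (f x) (f y) ≤ L * intrinsicDist Θᶜ x y)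
    (γ : ℝ → M) {a b : ℝ} (hab : a ≤ b) (hγ : ContinuousOn γ (Set.Icc a b))
    (hfin : eVariationOn γ (Set.Icc a b) < ⊤)
    (hK : (closure (γ '' Set.Icc a b ∩ Θ)).Countable) :
    edist (f (γ a)) (f (γ b)) ≤ L * eVariationOn γ (Set.Icc a b) := by
  classical
  set K := closure (γ '' Set.Icc a b ∩ Θ) with hKdef
  set T : Set ℝ := Set.Icc a b ∩ γ ⁻¹' K with hTdef
  have hTclosed : IsClosed T := hγ.preimage_isClosed_of_isClosed isClosed_Icc isClosed_closure
  have houtT : ∀ t ∈ Set.Icc a b, t ∉ T → γ t ∉ Θ := by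
    intro t ht htT hΘt
    exact htT ⟨ht, subset_closure ⟨Set.mem_image_of_mem γ ht, hΘt⟩⟩
  set r : ℝ → ℝ := fun t => dist (f (γ a)) (f (γ t)) with hrdef
  have hr : ContinuousOn r (Set.Icc a b) := ((continuous_const.dist continuous_id).comp hf).comp_continuousOn hγ
  have hra : r a = 0 := dist_self _
  set T' : Set ℝ := T ∪ {a, b} with hT'def
  set S : Set (ℝ × ℝ) := {p | a ≤ p.1 ∧ p.1 < p.2 ∧ p.2 ≤ b ∧ Set.Ioo p.1 p.2 ∩ T = ∅ ∧
    p.1 ∈ T' ∧ p.2 ∈ T'} with hSdef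
  -- two distinct members of S have disjoint open intervals
  have haux1 : ∀ p ∈ S, ∀ q ∈ S, ∀ w : ℝ,
      w ∈ Set.Ioo p.1 p.2 → w ∈ Set.Ioo q.1 q.2 → ¬ p.1 < q.1 := by
    rintro p ⟨hpa, hp12, hpb, hpT, -, -⟩ q ⟨hqa, hq12, hqb, hqT, hq1', -⟩ w hwp hwq hlt
    have hmem : q.1 ∈ Set.Ioo p.1 p.2 := ⟨hlt, lt_trans hwq.1 hwp.2⟩
    have hq1T : q.1 ∈ T := by
      rcases hq1' with h' | h'
      · exact h'
      · rcases h' with h' | h'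
        · exact absurd h' (ne_of_gt (lt_of_le_of_lt hpa hlt))
        · rw [Set.mem_singleton_iff] at h'
          exact absurd h' (ne_of_lt (lt_of_lt_of_le hmem.2 hpb))
    exact (Set.eq_empty_iff_forall_notMem.mp hpT) q.1 ⟨hmem, hq1T⟩
  have haux2 : ∀ p ∈ S, ∀ q ∈ S, ∀ w : ℝ,
      w ∈ Set.Ioo p.1 p.2 → w ∈ Set.Ioo q.1 q.2 → ¬ p.2 < q.2 := by
    rintro p ⟨hpa, hp12, hpb, hpT, -, hp2'⟩ q ⟨hqa, hq12, hqb, hqT, -, -⟩ w hwp hwq hlt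
    have hmem : p.2 ∈ Set.Ioo q.1 q.2 := ⟨lt_trans hwq.1 hwp.2, hlt⟩
    have hp2T : p.2 ∈ T := by
      rcases hp2' with h' | h'
      · exact h'
      · rcases h' with h' | h'
        · exact absurd h' (ne_of_gt (lt_of_le_of_lt hqa hmem.1))
        · rw [Set.mem_singleton_iff] at h'
          exact absurd h' (ne_of_lt (lt_of_lt_of_le hlt hqb))
    exact (Set.eq_empty_iff_forall_notMem.mp hqT) p.2 ⟨hmem, hp2T⟩
  have hkey : ∀ p ∈ S, ∀ q ∈ S, (Set.Ioo p.1 p.2 ∩ Set.Ioo q.1 q.2).Nonempty → p = q := by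
    rintro p hp q hq ⟨w, hwp, hwq⟩
    have h1 : p.1 = q.1 := by
      rcases lt_trichotomy p.1 q.1 with h | h | h
      · exact absurd h (haux1 p hp q hq w hwp hwq)
      · exact h
      · exact absurd h (haux1 q hq p hp w hwq hwp)
    have h2 : p.2 = q.2 := by
      rcases lt_trichotomy p.2 q.2 with h | h | h
      · exact absurd h (haux2 p hp q hq w hwp hwq)
      · exact h
      · exact absurd h (haux2 q hq p hp w hwq hwp)
    exact Prod.ext h1 h2
  have hdisjS : ∀ p ∈ S, ∀ q ∈ S, p ≠ q → Set.Ioo p.1 p.2 ∩ Set.Ioo q.1 q.2 = ∅ := by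
    intro p hp q hq hne
    rcases Set.eq_empty_or_nonempty (Set.Ioo p.1 p.2 ∩ Set.Ioo q.1 q.2) with h | h
    · exact h
    · exact absurd (hkey p hp q hq h) hne
  -- countability of S
  have hSc : S.Countable := by
    have hch : ∀ p : ℝ × ℝ, p ∈ S → ∃ q : ℚ, (q:ℝ) ∈ Set.Ioo p.1 p.2 := by
      rintro p ⟨-, h12, -⟩
      obtain ⟨q, hq1, hq2⟩ := exists_rat_btwn h12
      exact ⟨q, hq1, hq2⟩
    set F : ℝ × ℝ → ℚ := fun p => if h : ∃ q : ℚ, (q:ℝ) ∈ Set.Ioo p.1 p.2 then h.choose else 0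
      with hFdef
    have hFmem : ∀ p ∈ S, ((F p : ℚ) : ℝ) ∈ Set.Ioo p.1 p.2 := by
      intro p hp
      rw [hFdef]
      simp only
      rw [dif_pos (hch p hp)]
      exact (hch p hp).choose_spec
    refine (Set.mapsTo_univ F S).countable_of_injOn ?_ Set.countable_univ
    intro p hp p' hp' hpq
    refine hkey p hp p' hp' ⟨((F p : ℚ) : ℝ), hFmem p hp, ?_⟩
    rw [hpq]
    exact hFmem p' hp'
  -- measure bound per component
  have hcomp : ∀ p ∈ S, volume (r '' Set.Icc p.1 p.2)
      ≤ (L:ℝ≥0∞) * eVariationOn γ (Set.Icc p.1 p.2) := by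
    rintro p ⟨hpa, hp12, hpb, hpT, -, -⟩
    set W := (L:ℝ≥0∞) * eVariationOn γ (Set.Icc p.1 p.2) with hW
    have hWle : W ≤ (L:ℝ≥0∞) * eVariationOn γ (Set.Icc a b) :=
      mul_le_mul_right (eVariationOn.mono γ (Set.Icc_subset_Icc hpa hpb)) _
    have hWfin : W ≠ ⊤ :=
      (lt_of_le_of_lt hWle (ENNReal.mul_lt_top ENNReal.coe_lt_top hfin)).ne
    have hdd : ∀ s ∈ Set.Icc p.1 p.2, ∀ t ∈ Set.Icc p.1 p.2, s ≤ t →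
        dist (f (γ s)) (f (γ t)) ≤ W.toReal := by
      intro s hs t ht hst
      have hout' : ∀ w ∈ Set.Ioo s t, γ w ∉ Θ := by
        intro w hw
        have hwIoo : w ∈ Set.Ioo p.1 p.2 := ⟨lt_of_le_of_lt hs.1 hw.1, lt_of_lt_of_le hw.2 ht.2⟩
        refine houtT w ⟨hpa.trans hwIoo.1.le, hwIoo.2.le.trans hpb⟩ ?_
        exact fun hwT => (Set.eq_empty_iff_forall_notMem.mp hpT) w ⟨hwIoo, hwT⟩
      have hedist : edist (f (γ s)) (f (γ t)) ≤ W := by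
        refine (compBound Θ f hf L hLip γ hγ (hpa.trans hs.1) hst (ht.2.trans hpb) hfin hout').trans ?_
        exact mul_le_mul_right (eVariationOn.mono γ (Set.Icc_subset_Icc hs.1 ht.2)) _
      rw [dist_edist]
      exact ENNReal.toReal_mono hWfin hedist
    have habs : ∀ c ∈ r '' Set.Icc p.1 p.2, ∀ c' ∈ r '' Set.Icc p.1 p.2,
        |c - c'| ≤ W.toReal := by
      rintro _ ⟨s, hs, rfl⟩ _ ⟨t, ht, rfl⟩
      have hd : ∀ s' ∈ Set.Icc p.1 p.2, ∀ t' ∈ Set.Icc p.1 p.2, s' ≤ t' →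
          |r s' - r t'| ≤ W.toReal := by
        intro s' hs' t' ht' h
        have h0 := abs_dist_sub_le (f (γ s')) (f (γ t')) (f (γ a))
        rw [dist_comm (f (γ s')) (f (γ a)), dist_comm (f (γ t')) (f (γ a))] at h0
        exact h0.trans (hdd s' hs' t' ht' h)
      rcases le_total s t with h | h
      · exact hd s hs t ht h
      · rw [abs_sub_comm]; exact hd t ht s hs h
    have hne : r p.1 ∈ r '' Set.Icc p.1 p.2 := ⟨p.1, ⟨le_rfl, hp12.le⟩, rfl⟩
    have hbdd : BddBelow (r '' Set.Icc p.1 p.2) := by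
      refine ⟨r p.1 - W.toReal, fun c hc => ?_⟩
      have := (abs_sub_le_iff.mp (habs _ hne _ hc)).1
      linarith
    set m := sInf (r '' Set.Icc p.1 p.2) with hm
    have hsub : r '' Set.Icc p.1 p.2 ⊆ Set.Icc m (m + W.toReal) := by
      intro c hc
      refine ⟨csInf_le hbdd hc, ?_⟩
      have hlow : c - W.toReal ≤ m := by
        refine le_csInf ⟨_, hne⟩ (fun c' hc' => ?_)
        have := (abs_sub_le_iff.mp (habs _ hc _ hc')).1
        linarith
      linarith
    calc volume (r '' Set.Icc p.1 p.2) ≤ volume (Set.Icc m (m + W.toReal)) :=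
          measure_mono hsub
      _ = ENNReal.ofReal (m + W.toReal - m) := Real.volume_Icc
      _ = W := by rw [add_sub_cancel_left]; exact ENNReal.ofReal_toReal hWfin
  -- the covering
  set D := (fun z => dist (f (γ a)) (f z)) '' K with hD
  have hDc : D.Countable := hK.image _
  have hcover : Set.Ioo (0:ℝ) (r b) \ D ⊆ ⋃ p ∈ S, r '' Set.Icc p.1 p.2 := by
    rintro c ⟨⟨hc0, hcb⟩, hcD⟩
    set E : Set ℝ := Set.Icc a b ∩ r ⁻¹' Set.Iic c with hE
    have hEclosed : IsClosed E := hr.preimage_isClosed_of_isClosed isClosed_Icc isClosed_Iic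
    have hEcpt : IsCompact E := isCompact_Icc.of_isClosed_subset hEclosed Set.inter_subset_left
    have haE : a ∈ E := ⟨⟨le_rfl, hab⟩, by simp only [Set.mem_preimage, Set.mem_Iic, hra]; exact hc0.le⟩
    set tc := sSup E with htc
    have htcE : tc ∈ E := hEcpt.sSup_mem ⟨a, haE⟩
    obtain ⟨⟨htca, htcb⟩, htcc⟩ := htcE
    rw [Set.mem_preimage, Set.mem_Iic] at htcc
    have hgt : ∀ t ∈ Set.Icc a b, tc < t → c < r t := by
      intro t ht hlt
      by_contra hle
      push_neg at hle
      exact absurd (le_csSup hEcpt.bddAbove ⟨ht, hle⟩) (not_le.mpr hlt)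
    have htcltb : tc < b := by
      rcases lt_or_eq_of_le htcb with h | h
      · exact h
      · exact absurd (h ▸ htcc) (not_le.mpr hcb)
    have hrtc : r tc = c := by
      refine le_antisymm htcc (not_lt.mp fun hlt => ?_)
      have htend : Filter.Tendsto r (nhdsWithin tc (Set.Ioc tc b)) (nhds (r tc)) :=
        (hr tc ⟨htca, htcb⟩).mono_left
          (nhdsWithin_mono tc (fun w hw => ⟨htca.trans hw.1.le, hw.2⟩))
      have hev := htend.eventually_lt_const hlt
      have hnb : (nhdsWithin tc (Set.Ioc tc b)).NeBot := by
        rw [nhdsWithin_Ioc_eq_nhdsGT htcltb]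
        exact nhdsGT_neBot tc
      obtain ⟨t, htr, htIoc⟩ := (hev.and eventually_mem_nhdsWithin).exists
      exact lt_asymm (hgt t ⟨htca.trans htIoc.1.le, htIoc.2⟩ htIoc.1) htr
    have htcT : tc ∉ T := fun hT => hcD ⟨γ tc, hT.2, hrtc⟩
    have htcnea : tc ≠ a := by
      intro h
      rw [h, hra] at hrtc
      exact hc0.ne hrtc
    have htcneb : tc ≠ b := htcltb.ne
    have htcT' : tc ∉ T' := by
      rintro (h | h | h)
      · exact htcT h
      · exact htcnea h
      · exact htcneb (Set.mem_singleton_iff.mp h)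
    have hT'closed : IsClosed T' :=
      hTclosed.union (Set.Finite.isClosed ((Set.finite_singleton b).insert a))
    set A := T' ∩ Set.Icc a tc with hA
    have hAcpt : IsCompact A :=
      isCompact_Icc.of_isClosed_subset (hT'closed.inter isClosed_Icc) Set.inter_subset_right
    have haA : a ∈ A := ⟨Or.inr (Set.mem_insert a {b}), le_rfl, htca⟩
    set u := sSup A with hu
    have huA : u ∈ A := hAcpt.sSup_mem ⟨a, haA⟩
    have hutc : u < tc := lt_of_le_of_ne huA.2.2 (fun h => htcT' (h ▸ huA.1))
    set B := T' ∩ Set.Icc tc b with hB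
    have hBcpt : IsCompact B :=
      isCompact_Icc.of_isClosed_subset (hT'closed.inter isClosed_Icc) Set.inter_subset_right
    have hbB : b ∈ B := ⟨Or.inr (by simp), htcb, le_rfl⟩
    set v := sInf B with hv
    have hvB : v ∈ B := hBcpt.sInf_mem ⟨b, hbB⟩
    have htcv : tc < v := lt_of_le_of_ne hvB.2.1 (fun h => htcT' (h ▸ hvB.1))
    have hpS : (u, v) ∈ S := by
      refine ⟨huA.2.1, hutc.trans htcv, hvB.2.2, ?_, huA.1, hvB.1⟩
      rw [Set.eq_empty_iff_forall_notMem]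
      rintro t ⟨htIoo, htT⟩
      rcases le_or_gt t tc with h | h
      · exact absurd (le_csSup hAcpt.bddAbove ⟨Or.inl htT, huA.2.1.trans htIoo.1.le, h⟩)
          (not_le.mpr htIoo.1)
      · exact absurd (csInf_le hBcpt.bddBelow ⟨Or.inl htT, h.le, htIoo.2.le.trans hvB.2.2⟩)
          (not_le.mpr htIoo.2)
    exact Set.mem_biUnion hpS ⟨tc, ⟨hutc.le, htcv.le⟩, hrtc⟩
  -- put it together
  calc edist (f (γ a)) (f (γ b)) = ENNReal.ofReal (r b) := edist_dist _ _
    _ = volume (Set.Ioo (0:ℝ) (r b)) := by rw [Real.volume_Ioo, sub_zero]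
    _ = volume (Set.Ioo (0:ℝ) (r b) \ D) := (measure_diff_null (hDc.measure_zero _)).symm
    _ ≤ volume (⋃ p ∈ S, r '' Set.Icc p.1 p.2) := measure_mono hcover
    _ ≤ ∑' p : S, volume (r '' Set.Icc (p:ℝ×ℝ).1 (p:ℝ×ℝ).2) :=
        measure_biUnion_le volume hSc _
    _ ≤ ∑' p : S, (L:ℝ≥0∞) * eVariationOn γ (Set.Icc (p:ℝ×ℝ).1 (p:ℝ×ℝ).2) :=
        ENNReal.tsum_le_tsum (fun p => hcomp p p.2)
    _ = (L:ℝ≥0∞) * ∑' p : S, eVariationOn γ (Set.Icc (p:ℝ×ℝ).1 (p:ℝ×ℝ).2) :=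
        ENNReal.tsum_mul_left
    _ ≤ (L:ℝ≥0∞) * eVariationOn γ (Set.Icc a b) := by
        refine mul_le_mul_right ?_ _
        rw [ENNReal.tsum_eq_iSup_sum]
        refine iSup_le fun Fs => ?_
        classical
        have hinj : ∀ x ∈ Fs, ∀ y ∈ Fs, (Subtype.val x : ℝ × ℝ) = Subtype.val y → x = y :=
          fun x _ y _ h => Subtype.ext h
        rw [← Finset.sum_image (f := fun p : ℝ × ℝ => eVariationOn γ (Set.Icc p.1 p.2)) (g := Subtype.val) hinj]
        refine evar_sum_le γ (Fs.image Subtype.val).card (Fs.image Subtype.val) a b rfl hab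
          ?_ ?_
        · intro q hq
          obtain ⟨x, -, rfl⟩ := Finset.mem_image.mp hq
          obtain ⟨h1, h2, h3, -⟩ := x.2
          exact ⟨h1, h2, h3⟩
        · intro q hq q' hq' hne
          obtain ⟨x, -, rfl⟩ := Finset.mem_image.mp hq
          obtain ⟨x', -, rfl⟩ := Finset.mem_image.mp hq'
          exact hdisjS _ x.2 _ x'.2 hne

end Core
/-- Corollary: on a `C`-quasi-convex space, a continuous function which is intrinsically
`L`-Lipschitz outside a permeable set is `C·L`-Lipschitz on the whole space. -/
theorem stmt8 {M Y : Type*} [MetricSpace M] [MetricSpace Y] (C : NNReal)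
    (hqc : ∀ x y : M, intrinsicDist Set.univ x y ≤ C * edist x y)
    (Θ : Set M) (hΘ : Permeable Θ) (f : M → Y) (hf : Continuous f) (L : NNReal)
    (hLip : ∀ x ∈ Θᶜ, ∀ y ∈ Θᶜ, intrinsicDist Θᶜ x y < ⊤ →
      edist (f x) (f y) ≤ L * intrinsicDist Θᶜ x y) :
    LipschitzWith (C * L) f := by
  intro x y
  have hperm : thetaDistIn Set.univ Θ x y = intrinsicDist Set.univ x y :=
    hΘ x (Set.mem_univ x) y (Set.mem_univ y)
  have hfinI : intrinsicDist Set.univ x y < ⊤ :=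
    lt_of_le_of_lt (hqc x y) (ENNReal.mul_lt_top ENNReal.coe_lt_top (edist_lt_top x y))
  have key : edist (f x) (f y) ≤ (L : ℝ≥0∞) * thetaDistIn Set.univ Θ x y := by
    have hbtop : thetaDistIn Set.univ Θ x y ≠ ⊤ := by rw [hperm]; exact hfinI.ne
    apply ENNReal.le_of_forall_pos_le_add
    intro ε hε _
    obtain ⟨δ, hδ0, hδ⟩ : ∃ δ : ℝ≥0∞, 0 < δ ∧ (L:ℝ≥0∞) * δ ≤ ε := by
      rcases eq_or_ne (L:ℝ≥0∞) 0 with h0 | h0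
      · exact ⟨1, one_pos, by simp [h0]⟩
      · exact ⟨ε / L, ENNReal.div_pos (by exact_mod_cast hε.ne') ENNReal.coe_ne_top,
          ENNReal.mul_div_le⟩
    have hlt : thetaDistIn Set.univ Θ x y < thetaDistIn Set.univ Θ x y + δ :=
      ENNReal.lt_add_right hbtop hδ0.ne'
    obtain ⟨d, hd, hdlt⟩ := sInf_lt_iff.mp (lt_of_le_of_lt le_rfl hlt :
      thetaDistIn Set.univ Θ x y < thetaDistIn Set.univ Θ x y + δ)
    obtain ⟨γ, a0, b0, ⟨hab, hcont, hA, hB, -⟩, hlen, hcnt, hdeq⟩ := hd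
    rw [Set.inter_univ] at hcnt
    have hcore := coreBound Θ f hf L hLip γ hab hcont hlen hcnt
    rw [hA, hB] at hcore
    calc edist (f x) (f y) ≤ (L:ℝ≥0∞) * eVariationOn γ (Set.Icc a0 b0) := hcore
      _ = (L:ℝ≥0∞) * d := by rw [← hdeq]; rfl
      _ ≤ (L:ℝ≥0∞) * (thetaDistIn Set.univ Θ x y + δ) := mul_le_mul_right hdlt.le _
      _ = (L:ℝ≥0∞) * thetaDistIn Set.univ Θ x y + (L:ℝ≥0∞) * δ := mul_add _ _ _
      _ ≤ (L:ℝ≥0∞) * thetaDistIn Set.univ Θ x y + ε := add_le_add le_rfl hδ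
  calc edist (f x) (f y) ≤ (L:ℝ≥0∞) * thetaDistIn Set.univ Θ x y := key
    _ = (L:ℝ≥0∞) * intrinsicDist Set.univ x y := by rw [hperm]
    _ ≤ (L:ℝ≥0∞) * ((C:ℝ≥0∞) * edist x y) := mul_le_mul_right (hqc x y) _
    _ = ((C * L : NNReal) : ℝ≥0∞) * edist x y := by
        rw [ENNReal.coe_mul, ← mul_assoc, mul_comm (L:ℝ≥0∞) (C:ℝ≥0∞)]
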